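/- Let R be a unital ring, G a finite group, and θ : G → Aut(R) a group homomorphism into the ring automorphisms of R. Let M be a left R_θ[G]-module whose restriction along the inclusion R ⊆ R_θ[G] (r ↦ r·1_G) is a projective left R-module. Then ℤ[G] ⊗_ℤ M, equipped with the semi-diagonal action, is a projective left R_θ[G]-module. -/

import Mathlib

/-!
STATEMENT 3: Let `R` be a unital ring, `G` a finite group, and `θ : G → Aut(R)` a group
homomorphism into the ring automorphisms of `R`.  Let `M` be a left `R_θ[G]`-module whose
restriction along the inclusion `R ⊆ R_θ[G]` (`r ↦ r·1_G`) is a projective left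
`R`-module.  Then `ℤ[G] ⊗_ℤ M`, equipped with the semi-diagonal action, is a projective
left `R_θ[G]`-module.

The skew group ring `R_θ[G]` is formalized as any ring `A` together with an additive
isomorphism `Φ : (⊕_{g ∈ G} R·g) ≃+ A` (the domain realized as `G → R` since `G` is
finite) transporting the skew convolution product `(r·g)(s·h) = (r·θ(g)(s))·(gh)` to the
multiplication of `A` and the element `1_R·1_G` to `1`.  The element `r·g ∈ R_θ[G]` is
then `Φ (Pi.single g r)`.  Here `ℤ[G] = MonoidAlgebra ℤ G` is regarded as a left
`ℤ[G]`-module over itself, on which `g` acts by left multiplication by `g`; the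
semi-diagonal `A`-module structure on `ℤ[G] ⊗_ℤ M` is formalized as any `A`-module
structure satisfying `(r·g)·(v ⊗ m) = (g·v) ⊗ ((r·g)·m)` on generators and pure tensors,
and the restricted `R`-module structure on `M` as any `R`-module structure with
`r • m = (r·1_G) • m`.
-/

/-- The skew convolution product on `G → R` induced by `θ`. -/
def skewConv {R : Type*} [Ring R] {G : Type*} [Group G] [Fintype G]
    (θ : G →* RingAut R) (f f' : G → R) : G → R :=
  fun k => ∑ g : G, f g * θ g (f' (g⁻¹ * k))

/-- The element `1_R·1_G` of the skew group ring, in coordinates. -/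
def skewOne (R : Type*) [Ring R] (G : Type*) [Group G] [DecidableEq G] : G → R :=
  fun k => if k = 1 then 1 else 0

theorem semidiagonal_groupRing_tensor_projective_of_R_projective
    (R : Type) [Ring R] (G : Type) [Group G] [Fintype G] [DecidableEq G]
    (θ : G →* RingAut R)
    -- `A` is the skew group ring `R_θ[G]`:
    (A : Type) [Ring A] (Φ : (G → R) ≃+ A)
    (hΦmul : ∀ f f' : G → R, Φ f * Φ f' = Φ (skewConv θ f f'))
    (hΦone : Φ (skewOne R G) = 1)
    -- `M` is a left `R_θ[G]`-module:
    (M : Type) [AddCommGroup M] [Module A M]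
    -- the restriction of scalars of `M` along `r ↦ r·1_G`:
    [Module R M]
    (hres : ∀ (r : R) (m : M), r • m = (Φ (Pi.single (1 : G) r)) • m)
    -- `ℤ[G] ⊗_ℤ M` carries the semi-diagonal `R_θ[G]`-action
    -- (the `ℤ[G]`-action on `V = ℤ[G]` itself being left multiplication):
    [Module A (TensorProduct ℤ (MonoidAlgebra ℤ G) M)]
    (hsemi : ∀ (r : R) (g : G) (v : MonoidAlgebra ℤ G) (m : M),
      (Φ (Pi.single g r)) • (v ⊗ₜ[ℤ] m) =
        ((MonoidAlgebra.single g (1 : ℤ)) * v) ⊗ₜ[ℤ] ((Φ (Pi.single g r)) • m))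
    -- `M` is projective as a left `R`-module:
    (hM : Module.Projective R M) :
    Module.Projective A (TensorProduct ℤ (MonoidAlgebra ℤ G) M) := by
  classical
  obtain ⟨s, hs⟩ := hM
  -- key multiplication rule
  have key : ∀ (g h : G) (r t : R),
      Φ (Pi.single g r) * Φ (Pi.single h t) = Φ (Pi.single (g * h) (r * θ g t)) := by
    intro g h r t
    rw [hΦmul]
    congr 1
    funext k
    unfold skewConv
    rw [Finset.sum_eq_single g]
    · rw [Pi.single_eq_same]
      by_cases hk : k = g * h
      · have : g⁻¹ * k = h := by rw [hk]; group
        rw [this, Pi.single_eq_same, hk, Pi.single_eq_same]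
      · have h1 : g⁻¹ * k ≠ h := fun hc => hk (by rw [← hc]; group)
        rw [Pi.single_eq_of_ne h1, Pi.single_eq_of_ne hk, map_zero, mul_zero]
    · intro b _ hb
      rw [Pi.single_eq_of_ne hb, zero_mul]
    · intro hg; exact absurd (Finset.mem_univ g) hg
  have hone : Φ (Pi.single (1 : G) (1 : R)) = 1 := by
    rw [← hΦone]; congr 1; funext k; simp [skewOne, Pi.single_apply]
  have hθinv : ∀ (k : G) (x : R), θ k (θ k⁻¹ x) = x := by
    intro k x
    have h1 : θ k * θ k⁻¹ = 1 := by rw [← map_mul, mul_inv_cancel, map_one]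
    have h2 : (θ k) ((θ k⁻¹) x) = (θ k * θ k⁻¹) x := rfl
    rw [h2, h1]; rfl
  have huinv : ∀ g : G, Φ (Pi.single g (1 : R)) * Φ (Pi.single g⁻¹ (1 : R)) = 1 := by
    intro g
    rw [key]
    simp only [mul_inv_cancel, map_one, one_mul]
    exact hone
  -- the function c ↦ u_g * e c, as needed for mapRange
  have hf0 : ∀ g : G, (fun c : R => Φ (Pi.single g (1 : R)) * Φ (Pi.single (1 : G) c)) 0 = 0 := by
    intro g; simp
  have hfadd : ∀ (g : G) (a b : R),
      Φ (Pi.single g (1 : R)) * Φ (Pi.single (1 : G) (a + b)) =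
        Φ (Pi.single g (1 : R)) * Φ (Pi.single (1 : G) a) +
        Φ (Pi.single g (1 : R)) * Φ (Pi.single (1 : G) b) := by
    intro g a b
    rw [← mul_add, ← map_add, ← Pi.single_add]
  -- T g : M →+ (M →₀ A)
  let T : G → M →+ (M →₀ A) := fun g =>
    AddMonoidHom.mk'
      (fun m => Finsupp.mapRange (fun c => Φ (Pi.single g (1 : R)) * Φ (Pi.single (1 : G) c))
        (hf0 g) (s (Φ (Pi.single g⁻¹ (1 : R)) • m)))
      (by
        intro m₁ m₂
        rw [smul_add, map_add, Finsupp.mapRange_add (hfadd g)])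
  have Tapp : ∀ (g : G) (m : M), T g m =
      Finsupp.mapRange (fun c => Φ (Pi.single g (1 : R)) * Φ (Pi.single (1 : G) c))
        (hf0 g) (s (Φ (Pi.single g⁻¹ (1 : R)) • m)) := fun _ _ => rfl
  let B : MonoidAlgebra ℤ G →ₗ[ℤ] M →ₗ[ℤ] (M →₀ A) :=
    Finsupp.lsum ℤ (fun g => LinearMap.toSpanSingleton ℤ _ (T g).toIntLinearMap) ∘ₗ
      (MonoidAlgebra.coeffLinearEquiv ℤ).toLinearMap
  let σ0 : TensorProduct ℤ (MonoidAlgebra ℤ G) M →ₗ[ℤ] (M →₀ A) := TensorProduct.lift B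
  have σ0single : ∀ (g : G) (m : M), σ0 ((MonoidAlgebra.single g (1 : ℤ)) ⊗ₜ[ℤ] m) = T g m := by
    intro g m
    show (Finsupp.lsum ℤ (fun g => LinearMap.toSpanSingleton ℤ _ (T g).toIntLinearMap))
      (Finsupp.single g (1 : ℤ)) m = T g m
    rw [Finsupp.lsum_single]
    simp [LinearMap.toSpanSingleton_apply]
  -- multiplication compatibility fact used for A-linearity of the section
  have mulfact : ∀ (h g : G) (r c : R),
      Φ (Pi.single (h * g) (1 : R)) * Φ (Pi.single (1 : G) (θ (h * g)⁻¹ r * c)) =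
        Φ (Pi.single h r) * (Φ (Pi.single g (1 : R)) * Φ (Pi.single (1 : G) c)) := by
    intro h g r c
    rw [key, key, key]
    rw [mul_one, mul_one, one_mul, one_mul, map_mul, hθinv]
    congr 1
    rw [map_mul θ h g]
    rfl
  have smulfact : ∀ (h g : G) (r : R) (m : M),
      Φ (Pi.single (h * g)⁻¹ (1 : R)) • (Φ (Pi.single h r) • m) =
        (θ (h * g)⁻¹ r) • (Φ (Pi.single g⁻¹ (1 : R)) • m) := by
    intro h g r m
    rw [← mul_smul, key, hres (θ (h * g)⁻¹ r), ← mul_smul, key]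
    have h1 : (h * g)⁻¹ * h = 1 * g⁻¹ := by group
    have h2 : (θ (1 : G)) (1 : R) = 1 := by simp
    rw [h1, h2, mul_one, one_mul, one_mul]
  -- A-linearity of σ0 on single generators
  have hcore : ∀ (h : G) (r : R) (g : G) (m : M),
      σ0 (Φ (Pi.single h r) • ((MonoidAlgebra.single g (1 : ℤ)) ⊗ₜ[ℤ] m)) =
        Φ (Pi.single h r) • σ0 ((MonoidAlgebra.single g (1 : ℤ)) ⊗ₜ[ℤ] m) := by
    intro h r g m
    rw [hsemi, MonoidAlgebra.single_mul_single, one_mul, σ0single, σ0single, Tapp, Tapp,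
      smulfact, map_smul]
    ext x
    rw [Finsupp.mapRange_apply, Finsupp.smul_apply, Finsupp.smul_apply, smul_eq_mul,
      smul_eq_mul, Finsupp.mapRange_apply]
    exact mulfact h g r _
  have hsmul_single : ∀ (h : G) (r : R) (t : TensorProduct ℤ (MonoidAlgebra ℤ G) M),
      σ0 (Φ (Pi.single h r) • t) = Φ (Pi.single h r) • σ0 t := by
    intro h r t
    induction t using TensorProduct.induction_on with
    | zero => rw [smul_zero, map_zero, smul_zero]
    | add x y hx hy => rw [smul_add, map_add, hx, hy, map_add, smul_add]
    | tmul v m =>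
      induction v using MonoidAlgebra.induction_linear with
      | zero =>
        rw [show ((0 : MonoidAlgebra ℤ G) ⊗ₜ[ℤ] m) = 0 from TensorProduct.zero_tmul _ m,
          smul_zero, map_zero, smul_zero]
      | add f₁ f₂ h1 h2 =>
        rw [show ((f₁ + f₂ : MonoidAlgebra ℤ G) ⊗ₜ[ℤ] m) = f₁ ⊗ₜ[ℤ] m + f₂ ⊗ₜ[ℤ] m from
          TensorProduct.add_tmul f₁ f₂ m, smul_add, map_add, h1, h2, map_add, smul_add]
      | single g n =>
        have hv : ((MonoidAlgebra.single g n : MonoidAlgebra ℤ G) ⊗ₜ[ℤ] m)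
            = n • ((MonoidAlgebra.single g (1 : ℤ)) ⊗ₜ[ℤ] m) := by
          rw [TensorProduct.smul_tmul']
          congr 1
          rw [MonoidAlgebra.smul_single, smul_eq_mul, mul_one]
        rw [hv, smul_comm, map_zsmul, map_zsmul, hcore, smul_comm]
  have hsmul : ∀ (a : A) (t : TensorProduct ℤ (MonoidAlgebra ℤ G) M),
      σ0 (a • t) = a • σ0 t := by
    intro a t
    have ha : a = ∑ g : G, Φ (Pi.single g (Φ.symm a g)) := by
      rw [← map_sum, Finset.univ_sum_single, Φ.apply_symm_apply]
    conv_lhs => rw [ha]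
    conv_rhs => rw [ha]
    rw [Finset.sum_smul, map_sum, Finset.sum_smul]
    exact Finset.sum_congr rfl fun g _ => hsmul_single g _ t
  let σA : TensorProduct ℤ (MonoidAlgebra ℤ G) M →ₗ[A] (M →₀ A) :=
    { toFun := σ0, map_add' := σ0.map_add, map_smul' := fun a t => hsmul a t }
  let π : (M →₀ A) →ₗ[A] TensorProduct ℤ (MonoidAlgebra ℤ G) M :=
    Finsupp.linearCombination A (fun m : M => (1 : MonoidAlgebra ℤ G) ⊗ₜ[ℤ] m)
  have claim : ∀ (g : G) (S : M →₀ R),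
      π (Finsupp.mapRange (fun c => Φ (Pi.single g (1 : R)) * Φ (Pi.single (1 : G) c))
          (hf0 g) S) =
        Φ (Pi.single g (1 : R)) •
          ((1 : MonoidAlgebra ℤ G) ⊗ₜ[ℤ] (Finsupp.linearCombination R id S)) := by
    intro g S
    induction S using Finsupp.induction_linear with
    | zero => simp
    | add f₁ f₂ h1 h2 =>
      rw [Finsupp.mapRange_add (hfadd g), map_add, h1, h2, map_add, TensorProduct.tmul_add,
        smul_add]
    | single x c =>
      rw [Finsupp.mapRange_single]
      show (Finsupp.linearCombination A (fun m : M => (1 : MonoidAlgebra ℤ G) ⊗ₜ[ℤ] m))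
        (Finsupp.single x (Φ (Pi.single g (1 : R)) * Φ (Pi.single (1 : G) c))) = _
      rw [Finsupp.linearCombination_single, Finsupp.linearCombination_single, id_eq, mul_smul]
      congr 1
      rw [hsemi, ← hres, mul_one,
        show (MonoidAlgebra.single (1 : G) (1 : ℤ)) = 1 from (MonoidAlgebra.one_def).symm]
  have hsplit : ∀ t, π (σA t) = t := by
    intro t
    induction t using TensorProduct.induction_on with
    | zero => rw [map_zero, map_zero]
    | add x y hx hy => rw [map_add, map_add, hx, hy]
    | tmul v m =>
      induction v using MonoidAlgebra.induction_linear with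
      | zero =>
        rw [show ((0 : MonoidAlgebra ℤ G) ⊗ₜ[ℤ] m) = 0 from TensorProduct.zero_tmul _ m,
          map_zero, map_zero]
      | add f₁ f₂ h1 h2 =>
        rw [show ((f₁ + f₂ : MonoidAlgebra ℤ G) ⊗ₜ[ℤ] m) = f₁ ⊗ₜ[ℤ] m + f₂ ⊗ₜ[ℤ] m from
          TensorProduct.add_tmul f₁ f₂ m, map_add, map_add, h1, h2]
      | single g n =>
        have hv : ((MonoidAlgebra.single g n : MonoidAlgebra ℤ G) ⊗ₜ[ℤ] m)
            = n • ((MonoidAlgebra.single g (1 : ℤ)) ⊗ₜ[ℤ] m) := by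
          rw [TensorProduct.smul_tmul']
          congr 1
          rw [MonoidAlgebra.smul_single, smul_eq_mul, mul_one]
        rw [hv, map_zsmul, map_zsmul]
        congr 1
        show π (σ0 _) = _
        rw [σ0single, Tapp, claim, hs, hsemi, ← mul_smul, huinv, one_smul, mul_one]
  haveI : Module.Projective A (M →₀ A) := Module.Projective.of_free
  exact Module.Projective.of_split σA π (LinearMap.ext hsplit)
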